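/- arXiv:2003.02458 — 3 statements merged into one kernel-verified Lean document; each statement's English description precedes it below -/
import Mathlib

section
/- Let K = 1 and M ≥ 2, and suppose G_1 and G_z are positive definite Hermitian M×M complex matrices. If W = [w_1, W_z] ∈ ℂ^{M×M} is invertible and satisfies the stationary conditions W^H G_1 w_1 = e_1 and W^H G_z W_z = E_z, then there exist a vector u_1 ∈ ℂ^M and a real number λ with G_z u_1 = λ G_1 u_1 and u_1 ≠ 0, a matrix U_z ∈ ℂ^{M×(M−1)} with U_z^H G_z u_1 = 0 and U_z^H G_z U_z positive definite, a real number θ, and a unitary matrix Q ∈ ℂ^{(M−1)×(M−1)}, such that w_1 = u_1 (u_1^H G_1 u_1)^{−1/2} e^{iθ} and W_z = U_z (U_z^H G_z U_z)^{−1/2} Q. -/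
/- STATEMENT 5 (K = 1).
M×M complex matrices (M = 1 + L ≥ 2) are encoded as matrices indexed by
`Fin 1 ⊕ Fin L`. The first column (`Sum.inl 0`) is `w_1` and the last `L`
columns (`Sum.inr`) form `W_z`. `e_1 = Pi.single (Sum.inl 0) 1` and
`E_z = [e_2, …, e_M]`. For a positive definite Hermitian `B`, `B^{−1/2}` is
`S⁻¹` where `S` is the unique positive definite matrix with `S * S = B`;
for the positive real `u_1ᴴ G_1 u_1`, its `−1/2` power is
`(Real.sqrt (u_1ᴴ G_1 u_1).re)⁻¹`. -/

open Matrix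
open scoped ComplexOrder

/-- `E_z = [e_2, …, e_M]`. -/
def Ez (L : ℕ) : Matrix (Fin 1 ⊕ Fin L) (Fin L) ℂ :=
  Matrix.of fun i j => if i = Sum.inr j then 1 else 0

/-- If an invertible `W = [w_1, W_z]` satisfies the stationary conditions
`Wᴴ G_1 w_1 = e_1` and `Wᴴ G_z W_z = E_z`, then there are a generalized
eigenpair `(u_1, λ)` of `(G_z, G_1)`, a matrix `U_z` with `U_zᴴ G_z u_1 = 0` and
`U_zᴴ G_z U_z` positive definite, a real `θ` and a unitary `Q` such that
`w_1 = u_1 (u_1ᴴ G_1 u_1)^{−1/2} e^{iθ}` and `W_z = U_z (U_zᴴ G_z U_z)^{−1/2} Q`. -/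
theorem stationary_implies_gevp_form (L : ℕ) (hL : 1 ≤ L)
    (G1 Gz : Matrix (Fin 1 ⊕ Fin L) (Fin 1 ⊕ Fin L) ℂ)
    (hG1 : G1.PosDef) (hGz : Gz.PosDef)
    (W : Matrix (Fin 1 ⊕ Fin L) (Fin 1 ⊕ Fin L) ℂ) (hW : IsUnit W.det)
    (w1 : Fin 1 ⊕ Fin L → ℂ) (hw1 : w1 = fun i => W i (Sum.inl 0))
    (Wz : Matrix (Fin 1 ⊕ Fin L) (Fin L) ℂ) (hWz : Wz = W.submatrix id Sum.inr)
    (hst1 : (Wᴴ * G1) *ᵥ w1 = Pi.single (Sum.inl 0) 1)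
    (hstz : Wᴴ * Gz * Wz = Ez L) :
    ∃ (u1 : Fin 1 ⊕ Fin L → ℂ) (lam θ : ℝ)
      (Uz : Matrix (Fin 1 ⊕ Fin L) (Fin L) ℂ)
      (Q : Matrix (Fin L) (Fin L) ℂ),
        u1 ≠ 0 ∧
        Gz *ᵥ u1 = (lam : ℂ) • (G1 *ᵥ u1) ∧
        (Uzᴴ * Gz) *ᵥ u1 = 0 ∧
        (Uzᴴ * Gz * Uz).PosDef ∧
        Qᴴ * Q = 1 ∧ Q * Qᴴ = 1 ∧
        w1 = (Complex.exp (θ * Complex.I) *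
          ((Real.sqrt ((star u1 ⬝ᵥ (G1 *ᵥ u1)).re))⁻¹ : ℝ)) • u1 ∧
        ∃ S : Matrix (Fin L) (Fin L) ℂ,
          S.PosDef ∧ S * S = Uzᴴ * Gz * Uz ∧ Wz = Uz * S⁻¹ * Q := by
  classical
  set A : Matrix (Fin 1 ⊕ Fin L) (Fin 1 ⊕ Fin L) ℂ := Wᴴ * Gz * W with hA
  -- A is Hermitian
  have hAherm : Aᴴ = A := by
    rw [hA, conjTranspose_mul, conjTranspose_mul, conjTranspose_conjTranspose,
      hGz.isHermitian.eq, mul_assoc]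
  -- columns of A indexed by inr agree with Ez
  have hAcol : ∀ i j, A i (Sum.inr j) = Ez L i j := by
    intro i j
    have : A i (Sum.inr j) = (Wᴴ * Gz * Wz) i j := by
      simp only [hA, hWz, Matrix.mul_apply, Matrix.submatrix_apply, id]
    rw [this, hstz]
  -- first column of A is Wᴴ *ᵥ (Gz *ᵥ w1)
  have hAcol1 : ∀ i, A i (Sum.inl 0) = ((Wᴴ * Gz) *ᵥ w1) i := by
    intro i
    simp only [hA, Matrix.mul_apply, Matrix.mulVec, dotProduct, hw1]
  have hA0 : ∀ j, A (Sum.inr j) (Sum.inl 0) = 0 := by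
    intro j
    have := congrFun (congrFun hAherm (Sum.inr j)) (Sum.inl 0)
    rw [Matrix.conjTranspose_apply, hAcol (Sum.inl 0) j] at this
    simpa [Ez] using this.symm
  set c : ℂ := A (Sum.inl 0) (Sum.inl 0) with hc
  have hcreal : (starRingEnd ℂ) c = c := by
    have := congrFun (congrFun hAherm (Sum.inl 0)) (Sum.inl 0)
    rwa [Matrix.conjTranspose_apply] at this
  have hcre : (c.re : ℂ) = c := Complex.conj_eq_iff_re.mp hcreal
  -- key: (Wᴴ*Gz) *ᵥ w1 = c • Pi.single (inl 0) 1
  have hkey : (Wᴴ * Gz) *ᵥ w1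
      = c • (Pi.single (Sum.inl 0) 1 : Fin 1 ⊕ Fin L → ℂ) := by
    funext i
    rcases i with i | j
    · have : i = 0 := Subsingleton.elim _ _
      subst this
      rw [← hAcol1, ← hc]
      simp
    · rw [← hAcol1, hA0]
      simp
  -- hence Wᴴ *ᵥ (Gz *ᵥ w1) = Wᴴ *ᵥ (c • (G1 *ᵥ w1))
  have hWH : IsUnit (Wᴴ).det := by
    rw [Matrix.det_conjTranspose]; exact hW.star
  have hinj : Function.Injective (Wᴴ).mulVec := by
    rw [Matrix.mulVec_injective_iff_isUnit]
    exact (Matrix.isUnit_iff_isUnit_det _).mpr hWH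
  have heig : Gz *ᵥ w1 = (c.re : ℂ) • (G1 *ᵥ w1) := by
    apply hinj
    rw [hcre]
    have h1 : Wᴴ *ᵥ (Gz *ᵥ w1)
        = c • (Pi.single (Sum.inl 0) 1 : Fin 1 ⊕ Fin L → ℂ) := by
      rw [Matrix.mulVec_mulVec]; exact hkey
    have h2 : Wᴴ *ᵥ (c • (G1 *ᵥ w1))
        = c • (Pi.single (Sum.inl 0) 1 : Fin 1 ⊕ Fin L → ℂ) := by
      rw [Matrix.mulVec_smul, Matrix.mulVec_mulVec, hst1]
    rw [show Wᴴ.mulVec (Gz *ᵥ w1) = Wᴴ *ᵥ (Gz *ᵥ w1) from rfl,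
      show Wᴴ.mulVec (c • (G1 *ᵥ w1)) = Wᴴ *ᵥ (c • (G1 *ᵥ w1)) from rfl, h1, h2]
  -- star w1 ⬝ᵥ (G1 *ᵥ w1) = 1
  have haux : ∀ v : Fin 1 ⊕ Fin L → ℂ, (Wᴴ *ᵥ v) (Sum.inl 0) = star w1 ⬝ᵥ v := by
    intro v
    simp [Matrix.mulVec, dotProduct, Matrix.conjTranspose_apply, hw1]
  have hone : star w1 ⬝ᵥ (G1 *ᵥ w1) = 1 := by
    have := congrFun hst1 (Sum.inl 0)
    rw [← Matrix.mulVec_mulVec, haux] at this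
    simpa using this
  have hw1ne : w1 ≠ 0 := by
    intro h
    rw [h] at hone
    simp at hone
  -- Wzᴴ * Gz agrees with rows inr of Wᴴ * Gz
  have hrow : ∀ j k, (Wzᴴ * Gz) j k = (Wᴴ * Gz) (Sum.inr j) k := by
    intro j k
    simp only [Matrix.mul_apply, Matrix.conjTranspose_apply, hWz,
      Matrix.submatrix_apply, id]
  have hWzGzw1 : (Wzᴴ * Gz) *ᵥ w1 = 0 := by
    funext j
    have : ((Wzᴴ * Gz) *ᵥ w1) j = ((Wᴴ * Gz) *ᵥ w1) (Sum.inr j) := by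
      simp only [Matrix.mulVec, dotProduct, hrow]
    rw [this, ← hAcol1, hA0]
    rfl
  have hWzGzWz : Wzᴴ * Gz * Wz = 1 := by
    funext j j'
    have h1 : (Wzᴴ * Gz * Wz) j j' = (Wᴴ * Gz * Wz) (Sum.inr j) j' := by
      simp only [Matrix.mul_apply, hrow]
    rw [h1, hstz]
    simp [Ez, Matrix.one_apply, Sum.inr.injEq, eq_comm]
  refine ⟨w1, c.re, 0, Wz, 1, hw1ne, heig, hWzGzw1, ?_, by simp, by simp, ?_, 1,
    Matrix.PosDef.one, by rw [one_mul, hWzGzWz], by simp [hWz]⟩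
  · rw [hWzGzWz]; exact Matrix.PosDef.one
  · rw [hone]
    norm_num
end

section
/- Let K = 1 and M ≥ 2, and suppose G_1 and G_z are positive definite Hermitian M×M complex matrices. Let u_1 ∈ ℂ^M be nonzero with G_z u_1 = λ G_1 u_1 for some real λ, let U_z ∈ ℂ^{M×(M−1)} satisfy U_z^H G_z u_1 = 0 with [u_1, U_z] invertible, let θ ∈ ℝ and let Q ∈ ℂ^{(M−1)×(M−1)} be unitary. Then the matrix W = [w_1, W_z] with w_1 = u_1 (u_1^H G_1 u_1)^{−1/2} e^{iθ} and W_z = U_z (U_z^H G_z U_z)^{−1/2} Q is invertible and satisfies the stationary conditions W^H G_1 w_1 = e_1 and W^H G_z W_z = E_z. -/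
/- STATEMENT 6 (K = 1).
M×M complex matrices (M = 1 + L ≥ 2) are encoded as matrices indexed by
`Fin 1 ⊕ Fin L`. `[v, A]` for a vector `v` and an M×(M−1) matrix `A` is
`Matrix.fromColumns (Matrix.of fun i (_ : Fin 1) => v i) A`.
`e_1 = Pi.single (Sum.inl 0) 1` and `E_z = [e_2, …, e_M]`. For a positive
definite Hermitian `B`, `B^{−1/2}` is `S⁻¹` where `S` is the unique positive
definite matrix with `S * S = B` (quantified over all such `S`); for the
positive real `u_1ᴴ G_1 u_1`, its `−1/2` power is `(Real.sqrt (·).re)⁻¹`. -/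

open Matrix
open scoped ComplexOrder

/-- If `(u_1, λ)` is a generalized eigenpair of `(G_z, G_1)`, `U_zᴴ G_z u_1 = 0`,
`[u_1, U_z]` is invertible, `θ ∈ ℝ` and `Q` is unitary, then
`W = [w_1, W_z]` with `w_1 = u_1 (u_1ᴴ G_1 u_1)^{−1/2} e^{iθ}` and
`W_z = U_z (U_zᴴ G_z U_z)^{−1/2} Q` is invertible and satisfies the stationary
conditions `Wᴴ G_1 w_1 = e_1` and `Wᴴ G_z W_z = E_z`. -/
theorem gevp_form_implies_stationary (L : ℕ) (hL : 1 ≤ L)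
    (G1 Gz : Matrix (Fin 1 ⊕ Fin L) (Fin 1 ⊕ Fin L) ℂ)
    (hG1 : G1.PosDef) (hGz : Gz.PosDef)
    (u1 : Fin 1 ⊕ Fin L → ℂ) (hu1 : u1 ≠ 0) (lam : ℝ)
    (hgevp : Gz *ᵥ u1 = (lam : ℂ) • (G1 *ᵥ u1))
    (Uz : Matrix (Fin 1 ⊕ Fin L) (Fin L) ℂ)
    (horth : (Uzᴴ * Gz) *ᵥ u1 = 0)
    (hinv : IsUnit (Matrix.fromCols (Matrix.of fun i (_ : Fin 1) => u1 i) Uz).det)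
    (θ : ℝ) (Q : Matrix (Fin L) (Fin L) ℂ) (hQ1 : Qᴴ * Q = 1) (hQ2 : Q * Qᴴ = 1) :
    ∀ S : Matrix (Fin L) (Fin L) ℂ, S.PosDef → S * S = Uzᴴ * Gz * Uz →
      ∀ (w1 : Fin 1 ⊕ Fin L → ℂ) (Wz : Matrix (Fin 1 ⊕ Fin L) (Fin L) ℂ)
        (W : Matrix (Fin 1 ⊕ Fin L) (Fin 1 ⊕ Fin L) ℂ),
        w1 = (Complex.exp (θ * Complex.I) *
          ((Real.sqrt ((star u1 ⬝ᵥ (G1 *ᵥ u1)).re))⁻¹ : ℝ)) • u1 →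
        Wz = Uz * S⁻¹ * Q →
        W = Matrix.fromCols (Matrix.of fun i (_ : Fin 1) => w1 i) Wz →
        IsUnit W.det ∧
        (Wᴴ * G1) *ᵥ w1 = Pi.single (Sum.inl 0) 1 ∧
        Wᴴ * Gz * Wz = Ez L := by
  intro S hS hSS w1 Wz W hw1 hWz hW
  -- basic scalars
  set α : ℂ := star u1 ⬝ᵥ (G1 *ᵥ u1) with hα
  have hαpos : 0 < α := hG1.dotProduct_mulVec_pos hu1
  have hre : 0 < α.re := (Complex.lt_def.mp hαpos).1
  have him : α.im = 0 := ((Complex.lt_def.mp hαpos).2).symm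
  have hαre : (α.re : ℂ) = α := Complex.ext (by simp) (by simp [him])
  set r : ℝ := (Real.sqrt α.re)⁻¹ with hr
  set c : ℂ := Complex.exp (θ * Complex.I) * (r : ℝ) with hc
  have hrpos : 0 < r := by
    rw [hr]; exact inv_pos.mpr (Real.sqrt_pos.mpr hre)
  have hcc : star c * c = (((α.re)⁻¹ : ℝ) : ℂ) := by
    have h1 : star (Complex.exp (θ * Complex.I)) * Complex.exp (θ * Complex.I) = 1 := by
      rw [Complex.star_def, ← Complex.exp_conj, ← Complex.exp_add]
      simp [Complex.conj_I, mul_comm]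
    have h2 : ((r : ℝ) : ℂ) * ((r : ℝ) : ℂ) = (((α.re)⁻¹ : ℝ) : ℂ) := by
      have h2r : r * r = (α.re)⁻¹ := by
        rw [hr, ← mul_inv, Real.mul_self_sqrt hre.le]
      exact_mod_cast congrArg (fun t : ℝ => (t : ℂ)) h2r
    calc star c * c
        = (star (Complex.exp (θ * Complex.I)) * Complex.exp (θ * Complex.I)) *
            (((r : ℝ) : ℂ) * ((r : ℝ) : ℂ)) := by
          rw [hc, star_mul']
          simp only [Complex.star_def, Complex.conj_ofReal]
          ring
      _ = (((α.re)⁻¹ : ℝ) : ℂ) := by rw [h1, h2, one_mul]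
  have hcne : c ≠ 0 := by
    rw [hc]
    exact mul_ne_zero (Complex.exp_ne_zero _) (by exact_mod_cast hrpos.ne')
  -- lam ≠ 0
  have hGzu : Gz *ᵥ u1 ≠ 0 := by
    intro h
    have h2 := hGz.dotProduct_mulVec_pos hu1
    rw [h] at h2
    simp at h2
  have hlam : (lam : ℂ) ≠ 0 := by
    intro h
    exact hGzu (by rw [hgevp, h, zero_smul])
  have hG1u : Uzᴴ *ᵥ (G1 *ᵥ u1) = 0 := by
    have h1 : G1 *ᵥ u1 = (lam : ℂ)⁻¹ • (Gz *ᵥ u1) := by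
      rw [hgevp, smul_smul, inv_mul_cancel₀ hlam, one_smul]
    rw [h1, Matrix.mulVec_smul, Matrix.mulVec_mulVec, horth, smul_zero]
  -- the first-column matrix
  set U1 : Matrix (Fin 1 ⊕ Fin L) (Fin 1) ℂ := Matrix.of (fun i _ => u1 i) with hU1
  have hU1mulVec : ∀ v : (Fin 1 ⊕ Fin L) → ℂ, U1ᴴ *ᵥ v = fun _ => star u1 ⬝ᵥ v := by
    intro v
    funext i
    simp [Matrix.mulVec, Matrix.conjTranspose_apply, dotProduct, hU1]
  have hw1col : (Matrix.of fun i (_ : Fin 1) => w1 i) = c • U1 := by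
    ext i j
    simp [hw1, hU1, hc]
  -- S facts
  have hSdet : IsUnit S.det := isUnit_iff_ne_zero.mpr hS.det_pos.ne'
  have hSinvS : S⁻¹ * S = 1 := Matrix.nonsing_inv_mul S hSdet
  have hSSinv : S * S⁻¹ = 1 := Matrix.mul_nonsing_inv S hSdet
  have hSinvH : (S⁻¹)ᴴ = S⁻¹ := by
    rw [Matrix.conjTranspose_nonsing_inv, hS.1]
  -- key zero blocks
  have hzero1 : Uzᴴ * Gz * U1 = 0 := by
    ext i j
    have h := congrFun horth i
    simpa [Matrix.mul_apply, Matrix.mulVec, dotProduct, hU1] using h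
  have hzero2 : U1ᴴ * Gz * Uz = 0 := by
    have h := congrArg Matrix.conjTranspose hzero1
    rw [Matrix.conjTranspose_mul, Matrix.conjTranspose_mul, Matrix.conjTranspose_conjTranspose,
      hGz.1, Matrix.conjTranspose_zero, ← Matrix.mul_assoc] at h
    exact h
  have hWzH : Wzᴴ = Qᴴ * ((S⁻¹)ᴴ * Uzᴴ) := by
    rw [hWz, Matrix.conjTranspose_mul, Matrix.conjTranspose_mul]
  -- W as a product
  have hWfact : W = Matrix.fromCols U1 Uz *
      Matrix.fromBlocks (c • (1 : Matrix (Fin 1) (Fin 1) ℂ)) 0 0 (S⁻¹ * Q) := by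
    rw [Matrix.fromCols_mul_fromBlocks, hW, hw1col, hWz, Matrix.mul_smul,
      Matrix.mul_one, Matrix.mul_zero, add_zero, Matrix.mul_zero, zero_add,
      Matrix.mul_assoc]
  have hWH : Wᴴ = Matrix.fromRows (star c • U1ᴴ) Wzᴴ := by
    rw [hW, Matrix.conjTranspose_fromCols_eq_fromRows_conjTranspose, hw1col,
      Matrix.conjTranspose_smul]
  refine ⟨?_, ?_, ?_⟩
  · -- invertibility
    rw [hWfact, Matrix.det_mul]
    apply hinv.mul
    rw [Matrix.det_fromBlocks_zero₂₁, Matrix.det_mul]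
    have hdc : IsUnit (c • (1 : Matrix (Fin 1) (Fin 1) ℂ)).det := by
      rw [Matrix.det_smul]
      simp [isUnit_iff_ne_zero, hcne]
    have hdSinv : IsUnit (S⁻¹).det :=
      IsUnit.of_mul_eq_one S.det (by rw [← Matrix.det_mul, hSinvS, Matrix.det_one])
    have hdq : IsUnit Q.det :=
      IsUnit.of_mul_eq_one Qᴴ.det
        (by rw [mul_comm, ← Matrix.det_mul, hQ1, Matrix.det_one])
    exact hdc.mul (hdSinv.mul hdq)
  · -- W^H G1 w1 = e1
    have htop : ((star c • U1ᴴ) * G1) *ᵥ w1 = fun _ => 1 := by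
      rw [hw1, Matrix.mulVec_smul, Matrix.smul_mul, Matrix.smul_mulVec,
        ← Matrix.mulVec_mulVec, hU1mulVec]
      funext x
      have : c * (star c * ((star u1 ⬝ᵥ (G1 *ᵥ u1)))) = 1 := by
        rw [← hα, ← mul_assoc, mul_comm c (star c), hcc]
        push_cast
        rw [hαre]
        exact inv_mul_cancel₀ hαpos.ne'
      simpa using this
    have hbot : (Wzᴴ * G1) *ᵥ w1 = 0 := by
      rw [hw1, Matrix.mulVec_smul]
      have h0 : (Wzᴴ * G1) *ᵥ u1 = 0 := by
        rw [hWzH]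
        simp only [← Matrix.mulVec_mulVec]
        rw [hG1u, Matrix.mulVec_zero, Matrix.mulVec_zero]
      rw [h0, smul_zero]
    rw [hWH, Matrix.fromRows_mul, Matrix.fromRows_mulVec, htop, hbot]
    funext x
    rcases x with i | i
    · have : i = 0 := Subsingleton.elim _ _
      subst this
      simp
    · simp
  · -- W^H Gz Wz = Ez
    have hEz : Ez L = Matrix.fromRows (0 : Matrix (Fin 1) (Fin L) ℂ)
        (1 : Matrix (Fin L) (Fin L) ℂ) := by
      ext (i | i) j <;> simp [Ez, Matrix.one_apply]
    have htopm : (star c • U1ᴴ) * Gz * Wz = 0 := by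
      have h1 : U1ᴴ * Gz * Wz = U1ᴴ * Gz * Uz * (S⁻¹ * Q) := by
        rw [hWz]; simp only [Matrix.mul_assoc]
      rw [Matrix.smul_mul, Matrix.smul_mul, h1, hzero2, Matrix.zero_mul, smul_zero]
    have hbotm : Wzᴴ * Gz * Wz = 1 := by
      have key : S⁻¹ * (Uzᴴ * Gz * Uz) * S⁻¹ = 1 := by
        rw [← hSS]
        calc S⁻¹ * (S * S) * S⁻¹ = (S⁻¹ * S) * (S * S⁻¹) := by
              simp only [Matrix.mul_assoc]
          _ = 1 := by rw [hSinvS, hSSinv, Matrix.one_mul]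
      have h2 : Wzᴴ * Gz * Wz = Qᴴ * (S⁻¹ * (Uzᴴ * Gz * Uz) * S⁻¹) * Q := by
        rw [hWzH, hSinvH, hWz]
        simp only [Matrix.mul_assoc]
      rw [h2, key, Matrix.mul_one, hQ1]
    rw [hWH, Matrix.fromRows_mul, Matrix.fromRows_mul, htopm, hbotm, hEz]
end

section
/- Let K = 1 and M ≥ 2, and suppose G_1 and G_z are positive definite Hermitian M×M complex matrices. Let λ be the largest generalized eigenvalue of the pencil (G_z, G_1), i.e., λ is real, there is a nonzero u_1 with G_z u_1 = λ G_1 u_1, and every real μ admitting a nonzero u with G_z u = μ G_1 u satisfies μ ≤ λ. Let U_z ∈ ℂ^{M×(M−1)} satisfy U_z^H G_z u_1 = 0 with [u_1, U_z] invertible. Then the matrix W = [u_1 (u_1^H G_1 u_1)^{−1/2}, U_z (U_z^H G_z U_z)^{−1/2}] globally minimizes J_W(W) = w_1^H G_1 w_1 + trace(W_z^H G_z W_z) − 2 log|det W| over all invertible M×M complex matrices. -/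
/- STATEMENT 7 (K = 1).
M×M complex matrices (M = 1 + L ≥ 2) are encoded as matrices indexed by
`Fin 1 ⊕ Fin L`. The first column (`Sum.inl 0`) is `w_1` and the last `L`
columns (`Sum.inr`) form `W_z`. For a positive definite Hermitian `B`,
`B^{−1/2}` is `S⁻¹` where `S` is the unique positive definite matrix with
`S * S = B` (quantified over all such `S`); for the positive real
`u_1ᴴ G_1 u_1`, its `−1/2` power is `(Real.sqrt (·).re)⁻¹`. -/

open Matrix
open scoped ComplexOrder

/-- The cost function (K = 1)
`J_W(W) = w_1ᴴ G_1 w_1 + trace(W_zᴴ G_z W_z) − 2 log|det W|`. -/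
noncomputable def JW {L : ℕ}
    (G1 Gz : Matrix (Fin 1 ⊕ Fin L) (Fin 1 ⊕ Fin L) ℂ)
    (W : Matrix (Fin 1 ⊕ Fin L) (Fin 1 ⊕ Fin L) ℂ) : ℝ :=
  (star (fun i => W i (Sum.inl 0)) ⬝ᵥ (G1 *ᵥ (fun i => W i (Sum.inl 0)))).re
    + (Matrix.trace ((W.submatrix id Sum.inr)ᴴ * Gz * (W.submatrix id Sum.inr))).re
    - 2 * Real.log ‖W.det‖

/-- Classical bound: for a positive definite complex matrix `P`,
`card n ≤ tr P − log det P`. -/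
lemma card_le_trace_sub_log_det {n : Type*} [Fintype n] [DecidableEq n]
    {P : Matrix n n ℂ} (hP : P.PosDef) :
    (Fintype.card n : ℝ) ≤ (Matrix.trace P).re - Real.log (P.det.re) := by
  set e := hP.1.eigenvalues with he
  have hpos : ∀ i, 0 < e i := hP.eigenvalues_pos
  have htr : (Matrix.trace P).re = ∑ i, e i := by
    have : Matrix.trace P = ∑ i, (e i : ℂ) := by
      nth_rewrite 1 [hP.1.spectral_theorem]
      rw [Unitary.conjStarAlgAut_apply, Matrix.trace_mul_cycle]
      rw [show (star (hP.1.eigenvectorUnitary : Matrix n n ℂ)) *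
          (hP.1.eigenvectorUnitary : Matrix n n ℂ) = 1 from
          Unitary.coe_star_mul_self hP.1.eigenvectorUnitary, one_mul,
        Matrix.trace_diagonal]
      rfl
    rw [this]
    simp
  have hdet : P.det.re = ∏ i, e i := by
    have : P.det = ((∏ i, e i : ℝ) : ℂ) := by
      rw [hP.1.det_eq_prod_eigenvalues]; push_cast; rfl
    rw [this, Complex.ofReal_re]
  rw [htr, hdet, Real.log_prod (fun i _ => (hpos i).ne'), ← Finset.sum_sub_distrib]
  calc (Fintype.card n : ℝ) = ∑ _i : n, (1 : ℝ) := by simp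
    _ ≤ ∑ i, (e i - Real.log (e i)) := by
        apply Finset.sum_le_sum
        intro i _
        have := Real.log_le_sub_one_of_pos (hpos i)
        linarith

lemma posDef_conj_mul {n : Type*} [Fintype n] [DecidableEq n]
    {G : Matrix n n ℂ} (hG : G.PosDef) {T : Matrix n n ℂ} (hT : IsUnit T.det) :
    (Tᴴ * G * T).PosDef := by
  refine Matrix.PosDef.of_dotProduct_mulVec_pos (Matrix.isHermitian_conjTranspose_mul_mul T hG.1) (fun x hx => ?_)
  have hTx : T *ᵥ x ≠ 0 := by
    have hinj := Matrix.mulVec_injective_iff_isUnit.mpr ((Matrix.isUnit_iff_isUnit_det T).mpr hT)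
    intro h
    exact hx (hinj (by simpa using h))
  have : star x ⬝ᵥ (Tᴴ * G * T) *ᵥ x = star (T *ᵥ x) ⬝ᵥ G *ᵥ (T *ᵥ x) := by
    rw [← Matrix.mulVec_mulVec, ← Matrix.mulVec_mulVec, Matrix.dotProduct_mulVec _ Tᴴ,
      ← Matrix.star_mulVec]
  rw [this]
  exact hG.dotProduct_mulVec_pos hTx

/-- diagonal entry of `Xᴴ G X` is a quadratic form in column `j`. -/
lemma diag_entry {n m : Type*} [Fintype n] [Fintype m]
    (G : Matrix n n ℂ) (X : Matrix n m ℂ) (j : m) :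
    (Xᴴ * G * X) j j = star (fun i => X i j) ⬝ᵥ (G *ᵥ fun i => X i j) := by
  simp only [Matrix.mul_apply, Matrix.conjTranspose_apply, dotProduct, Matrix.mulVec,
    Pi.star_apply, Finset.sum_mul, Finset.mul_sum]
  rw [Finset.sum_comm]
  congr 1; ext k; congr 1; ext i; ring

lemma rayleigh_lb {n : Type*} [Fintype n] [DecidableEq n]
    {C : Matrix n n ℂ} (hC : C.IsHermitian) {c : ℝ}
    (hc : ∀ i, c ≤ hC.eigenvalues i) (y : n → ℂ) :
    c * (star y ⬝ᵥ y).re ≤ (star y ⬝ᵥ C *ᵥ y).re := by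
  set U : Matrix n n ℂ := (hC.eigenvectorUnitary : Matrix n n ℂ) with hU
  set z : n → ℂ := star U *ᵥ y with hz
  have hUU : U * star U = 1 := Unitary.coe_mul_star_self hC.eigenvectorUnitary
  have hsz : star y ᵥ* U = star z := by
    rw [hz, Matrix.star_mulVec, Matrix.star_eq_conjTranspose,
      Matrix.conjTranspose_conjTranspose]
  have h1 : star y ⬝ᵥ C *ᵥ y =
      star z ⬝ᵥ (Matrix.diagonal (Complex.ofReal ∘ hC.eigenvalues)) *ᵥ z := by
    nth_rewrite 1 [hC.spectral_theorem]
    rw [Unitary.conjStarAlgAut_apply, ← Matrix.mulVec_mulVec, ← Matrix.mulVec_mulVec,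
      Matrix.dotProduct_mulVec _ U, hsz]
    rfl
  have h2 : star y ⬝ᵥ y = star z ⬝ᵥ z := by
    have : star y ⬝ᵥ y = star y ⬝ᵥ (U * star U) *ᵥ y := by rw [hUU, Matrix.one_mulVec]
    rw [this, ← Matrix.mulVec_mulVec, Matrix.dotProduct_mulVec _ U, hsz, hz]
  rw [h1, h2]
  have hzz : (star z ⬝ᵥ z).re = ∑ i, Complex.normSq (z i) := by
    simp [dotProduct, Complex.normSq_apply, Complex.re_sum, mul_comm]
  have hdz : (star z ⬝ᵥ (Matrix.diagonal (Complex.ofReal ∘ hC.eigenvalues)) *ᵥ z).re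
      = ∑ i, hC.eigenvalues i * Complex.normSq (z i) := by
    simp only [dotProduct, Matrix.mulVec_diagonal, Pi.star_apply, Complex.re_sum,
      Function.comp_apply]
    congr 1; ext i
    have h3 : star (z i) * (((hC.eigenvalues i : ℂ)) * z i)
        = (hC.eigenvalues i : ℂ) * ((starRingEnd ℂ) (z i) * z i) := by
      rw [show star (z i) = (starRingEnd ℂ) (z i) from rfl]; ring
    rw [h3, ← Complex.normSq_eq_conj_mul_self, ← Complex.ofReal_mul]
    simp
  rw [hdz, hzz, Finset.mul_sum]
  apply Finset.sum_le_sum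
  intro i _
  exact mul_le_mul_of_nonneg_right (hc i) (Complex.normSq_nonneg _)

/-- sandwich identity -/
lemma dot_sandwich {n : Type*} [Fintype n]
    {A : Matrix n n ℂ} (hA : Aᴴ = A) (M : Matrix n n ℂ) (x : n → ℂ) :
    star x ⬝ᵥ (A * M * A) *ᵥ x = star (A *ᵥ x) ⬝ᵥ M *ᵥ (A *ᵥ x) := by
  rw [← Matrix.mulVec_mulVec, ← Matrix.mulVec_mulVec, Matrix.dotProduct_mulVec _ A,
    ← hA, ← Matrix.star_mulVec, hA]

section
open scoped MatrixOrder Matrix.Norms.L2Operator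

lemma pencil_quad_lb {n : Type*} [Fintype n] [DecidableEq n]
    {G1 Gz : Matrix n n ℂ} (hG1 : G1.PosDef) (hGz : Gz.PosDef) {lam : ℝ}
    (hmax : ∀ (mu : ℝ) (u : n → ℂ), u ≠ 0 →
      Gz *ᵥ u = (mu : ℂ) • (G1 *ᵥ u) → mu ≤ lam) (x : n → ℂ) :
    lam⁻¹ * (star x ⬝ᵥ Gz *ᵥ x).re ≤ (star x ⬝ᵥ G1 *ᵥ x).re := by
  set A := CFC.sqrt Gz with hA
  have hAh : Aᴴ = A := (CFC.sqrt_nonneg Gz).posSemidef.1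
  have hAA : A * A = Gz := CFC.sqrt_mul_sqrt_self Gz hGz.posSemidef.nonneg
  have hdetA : IsUnit A.det := by
    have h0 : Gz.det ≠ 0 := hGz.det_pos.ne'
    rw [← hAA, Matrix.det_mul] at h0
    exact (IsUnit.mk0 _ (left_ne_zero_of_mul h0))
  set B := A⁻¹ with hB
  have hBh : Bᴴ = B := by rw [hB, Matrix.conjTranspose_nonsing_inv, hAh]
  have hAB : A * B = 1 := Matrix.mul_nonsing_inv A hdetA
  have hBA : B * A = 1 := Matrix.nonsing_inv_mul A hdetA
  have hdetB : IsUnit B.det :=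
    IsUnit.of_mul_eq_one A.det (by rw [← Matrix.det_mul, hBA, Matrix.det_one])
  set C := Bᴴ * G1 * B with hC
  have hCpd : C.PosDef := posDef_conj_mul hG1 hdetB
  have hCh := hCpd.1
  have heig : ∀ i, lam⁻¹ ≤ hCh.eigenvalues i := by
    intro i
    set e := hCh.eigenvalues i with he
    have hepos : 0 < e := hCpd.eigenvalues_pos i
    set v : n → ℂ := ⇑(hCh.eigenvectorBasis i) with hv
    have hv0 : v ≠ 0 := fun h => hCh.eigenvectorBasis.orthonormal.ne_zero i (by simpa [hv] using h)
    have hCv : C *ᵥ v = (e : ℝ) • v := hCh.mulVec_eigenvectorBasis i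
    set u := B *ᵥ v with hu
    have hu0 : u ≠ 0 := by
      intro h
      apply hv0
      have : A *ᵥ (B *ᵥ v) = v := by rw [Matrix.mulVec_mulVec, hAB, Matrix.one_mulVec]
      rw [← this, ← hu, h, Matrix.mulVec_zero]
    have hABv : ∀ w : n → ℂ, A *ᵥ (B *ᵥ w) = w := fun w => by
      rw [Matrix.mulVec_mulVec, hAB, Matrix.one_mulVec]
    have hAu : A *ᵥ u = v := by rw [hu, hABv]
    have hAv : A *ᵥ v = Gz *ᵥ u := by rw [← hAu, Matrix.mulVec_mulVec, hAA]
    have hG1u : G1 *ᵥ u = ((e : ℝ) : ℂ) • (Gz *ᵥ u) := by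
      have h1 : B *ᵥ (G1 *ᵥ u) = e • v := by
        have h0 : (Bᴴ * G1 * B) *ᵥ v = e • v := hCv
        rw [← Matrix.mulVec_mulVec, ← Matrix.mulVec_mulVec, hBh] at h0
        rwa [hu]
      have h2 : G1 *ᵥ u = A *ᵥ (e • v) := by rw [← h1, hABv]
      rw [h2, Matrix.mulVec_smul, hAv, RCLike.real_smul_eq_coe_smul (K := ℂ)]
      rfl
    have hGzu : Gz *ᵥ u = ((e⁻¹ : ℝ) : ℂ) • (G1 *ᵥ u) := by
      rw [hG1u, smul_smul, Complex.ofReal_inv,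
        inv_mul_cancel₀ ((Complex.ofReal_ne_zero).mpr hepos.ne'), one_smul]
    have hle := hmax e⁻¹ u hu0 hGzu
    calc lam⁻¹ ≤ (e⁻¹)⁻¹ := inv_anti₀ (by positivity) hle
      _ = e := inv_inv e
  have hx1 : star x ⬝ᵥ G1 *ᵥ x = star (A *ᵥ x) ⬝ᵥ C *ᵥ (A *ᵥ x) := by
    have hACA : A * C * A = G1 := by
      rw [hC, hBh]
      calc A * (B * G1 * B) * A = (A * B) * G1 * (B * A) := by
            simp only [mul_assoc]
        _ = G1 := by rw [hAB, hBA, one_mul, mul_one]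
    rw [← hACA, dot_sandwich hAh]
  have hx2 : star x ⬝ᵥ Gz *ᵥ x = star (A *ᵥ x) ⬝ᵥ (A *ᵥ x) := by
    have : star x ⬝ᵥ (A * 1 * A) *ᵥ x = star (A *ᵥ x) ⬝ᵥ 1 *ᵥ (A *ᵥ x) :=
      dot_sandwich hAh 1 x
    rw [mul_one, hAA] at this
    rwa [Matrix.one_mulVec] at this
  rw [hx1, hx2]
  exact rayleigh_lb hCh heig (A *ᵥ x)

end

lemma det_sandwich_eq {n : Type*} [Fintype n] [DecidableEq n]
    (G T : Matrix n n ℂ) {g : ℝ} (hG : G.det = (g : ℂ)) :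
    (Tᴴ * G * T).det = ((‖T.det‖^2 * g : ℝ) : ℂ) := by
  rw [Matrix.det_mul, Matrix.det_mul, Matrix.det_conjTranspose, hG]
  rw [show star T.det * (g:ℂ) * T.det = (g:ℂ) * ((starRingEnd ℂ) T.det * T.det) from by
    rw [show star T.det = (starRingEnd ℂ) T.det from rfl]; ring]
  rw [← Complex.normSq_eq_conj_mul_self, ← Complex.sq_norm]
  push_cast; ring

/-- scaled quadratic form -/
lemma quad_smul {n : Type*} [Fintype n] (G : Matrix n n ℂ) (a : ℝ) (v : n → ℂ) :
    star (((a:ℂ)) • v) ⬝ᵥ G *ᵥ (((a:ℂ)) • v) = ((a^2 : ℝ) : ℂ) * (star v ⬝ᵥ G *ᵥ v) := by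
  rw [star_smul, Matrix.mulVec_smul, smul_dotProduct, dotProduct_smul,
    smul_eq_mul, smul_eq_mul, ← mul_assoc]
  congr 1
  rw [show star ((a:ℂ)) = (a:ℂ) from by simp]
  push_cast; ring


/-- If `λ` is the largest generalized eigenvalue of the pencil `(G_z, G_1)` with
eigenvector `u_1`, and `U_zᴴ G_z u_1 = 0` with `[u_1, U_z]` invertible, then
`W = [u_1 (u_1ᴴ G_1 u_1)^{−1/2}, U_z (U_zᴴ G_z U_z)^{−1/2}]` globally minimizes
`J_W` over all invertible M×M complex matrices. -/
theorem largest_gevp_global_min (L : ℕ) (hL : 1 ≤ L)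
    (G1 Gz : Matrix (Fin 1 ⊕ Fin L) (Fin 1 ⊕ Fin L) ℂ)
    (hG1 : G1.PosDef) (hGz : Gz.PosDef)
    (u1 : Fin 1 ⊕ Fin L → ℂ) (hu1 : u1 ≠ 0) (lam : ℝ)
    (hgevp : Gz *ᵥ u1 = (lam : ℂ) • (G1 *ᵥ u1))
    (hmax : ∀ (mu : ℝ) (u : Fin 1 ⊕ Fin L → ℂ), u ≠ 0 →
      Gz *ᵥ u = (mu : ℂ) • (G1 *ᵥ u) → mu ≤ lam)
    (Uz : Matrix (Fin 1 ⊕ Fin L) (Fin L) ℂ)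
    (horth : (Uzᴴ * Gz) *ᵥ u1 = 0)
    (hinv : IsUnit (Matrix.fromCols (Matrix.of fun i (_ : Fin 1) => u1 i) Uz).det) :
    ∀ S : Matrix (Fin L) (Fin L) ℂ, S.PosDef → S * S = Uzᴴ * Gz * Uz →
      ∀ W : Matrix (Fin 1 ⊕ Fin L) (Fin 1 ⊕ Fin L) ℂ,
        W = Matrix.fromCols
          (Matrix.of fun i (_ : Fin 1) =>
            (((Real.sqrt ((star u1 ⬝ᵥ (G1 *ᵥ u1)).re))⁻¹ : ℝ) : ℂ) * u1 i)
          (Uz * S⁻¹) →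
        IsUnit W.det ∧
        ∀ W' : Matrix (Fin 1 ⊕ Fin L) (Fin 1 ⊕ Fin L) ℂ,
          IsUnit W'.det → JW G1 Gz W ≤ JW G1 Gz W' := by
  intro S hS hSS W hW
  -- basic positivity facts
  set r : ℝ := (star u1 ⬝ᵥ (G1 *ᵥ u1)).re with hrdef
  have hr : 0 < r := hG1.re_dotProduct_pos hu1
  have hrC : star u1 ⬝ᵥ (G1 *ᵥ u1) = (r : ℂ) := by
    obtain ⟨h1, h2⟩ := RCLike.pos_iff.mp (hG1.dotProduct_mulVec_pos hu1)
    exact Complex.ext rfl h2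
  have hzG : star u1 ⬝ᵥ (Gz *ᵥ u1) = (lam : ℂ) * (r : ℂ) := by
    rw [hgevp, dotProduct_smul, hrC, smul_eq_mul]
  have hlam : 0 < lam := by
    have h1 : 0 < (star u1 ⬝ᵥ (Gz *ᵥ u1)).re := hGz.re_dotProduct_pos hu1
    rw [hzG] at h1
    have h2 : ((lam:ℂ) * (r:ℂ)).re = lam * r := by
      rw [← Complex.ofReal_mul, Complex.ofReal_re]
    rw [h2] at h1
    nlinarith
  set dGz : ℝ := Gz.det.re with hdGzdef
  have hdGz : 0 < dGz := by
    obtain ⟨h1, _⟩ := RCLike.pos_iff.mp hGz.det_pos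
    exact h1
  have hdetGzC : Gz.det = (dGz : ℂ) := by
    obtain ⟨_, h2⟩ := RCLike.pos_iff.mp hGz.det_pos
    exact Complex.ext rfl h2
  -- the scaling constant
  set c : ℝ := (Real.sqrt r)⁻¹ with hcdef
  have hc : 0 < c := by positivity
  have hc2 : c ^ 2 * r = 1 := by
    rw [hcdef, inv_pow, Real.sq_sqrt hr.le, inv_mul_cancel₀ hr.ne']
  -- the two column blocks
  set C1 : Matrix (Fin 1 ⊕ Fin L) (Fin 1) ℂ :=
    Matrix.of (fun i (_ : Fin 1) => ((c:ℝ) : ℂ) * u1 i) with hC1def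
  set C2 : Matrix (Fin 1 ⊕ Fin L) (Fin L) ℂ := Uz * S⁻¹ with hC2def
  have hWcols : W = Matrix.fromCols C1 C2 := hW
  have hcol1 : (fun i => W i (Sum.inl 0)) = ((c:ℂ)) • u1 := by
    funext i
    rw [hWcols, Matrix.fromCols_apply_inl]
    simp [hC1def]
  have hsub : W.submatrix id Sum.inr = C2 := by
    ext i j
    rw [Matrix.submatrix_apply, id_eq, hWcols, Matrix.fromCols_apply_inr]
  -- S facts
  have hSh : Sᴴ = S := hS.1
  have hSdet : IsUnit S.det := (Matrix.isUnit_iff_isUnit_det S).mp hS.isUnit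
  have hC2H : C2ᴴ = S⁻¹ * Uzᴴ := by
    rw [hC2def, Matrix.conjTranspose_mul, Matrix.conjTranspose_nonsing_inv, hSh]
  -- block (2,1) vanishes
  have hUzC1 : (Uzᴴ * Gz) * C1 = 0 := by
    ext k j
    have h0 : ∑ i, (Uzᴴ * Gz) k i * u1 i = 0 := by
      have := congrFun horth k
      simpa [Matrix.mulVec, dotProduct] using this
    simp only [Matrix.mul_apply, Matrix.of_apply, Matrix.zero_apply, hC1def]
    calc ∑ i, (Uzᴴ * Gz) k i * (((c:ℝ):ℂ) * u1 i)
        = ((c:ℝ):ℂ) * ∑ i, (Uzᴴ * Gz) k i * u1 i := by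
          rw [Finset.mul_sum]; congr 1; ext i; ring
      _ = 0 := by rw [h0, mul_zero]
  have hblock21 : C2ᴴ * Gz * C1 = 0 := by
    rw [hC2H, Matrix.mul_assoc S⁻¹ Uzᴴ Gz, Matrix.mul_assoc S⁻¹ (Uzᴴ * Gz) C1, hUzC1,
      Matrix.mul_zero]
  -- block (2,2) is the identity
  have hblock22 : C2ᴴ * Gz * C2 = 1 := by
    rw [hC2H, hC2def]
    calc S⁻¹ * Uzᴴ * Gz * (Uz * S⁻¹) = S⁻¹ * (Uzᴴ * Gz * Uz) * S⁻¹ := by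
          simp only [Matrix.mul_assoc]
      _ = S⁻¹ * (S * S) * S⁻¹ := by rw [hSS]
      _ = (S⁻¹ * S) * (S * S⁻¹) := by simp only [Matrix.mul_assoc]
      _ = 1 := by rw [Matrix.nonsing_inv_mul S hSdet, Matrix.mul_nonsing_inv S hSdet, one_mul]
  -- block (1,1) entry is lam
  have hquad1 : ∀ (G : Matrix (Fin 1 ⊕ Fin L) (Fin 1 ⊕ Fin L) ℂ),
      star (fun i => C1 i 0) ⬝ᵥ (G *ᵥ fun i => C1 i 0)
        = ((c^2 : ℝ) : ℂ) * (star u1 ⬝ᵥ (G *ᵥ u1)) := by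
    intro G
    have : (fun i => C1 i 0) = ((c:ℂ)) • u1 := by
      funext i; simp [hC1def]
    rw [this, quad_smul]
  have hblock11 : (C1ᴴ * Gz * C1) 0 0 = (lam : ℂ) := by
    rw [diag_entry, hquad1, hzG]
    rw [show ((c^2:ℝ):ℂ) * ((lam:ℂ) * (r:ℂ)) = (((c^2*r*lam : ℝ)):ℂ) from by push_cast; ring]
    rw [hc2]
    norm_num
  -- determinant of Wᴴ Gz W
  have hWP : Wᴴ * Gz * W
      = Matrix.fromBlocks (C1ᴴ * Gz * C1) (C1ᴴ * Gz * C2) (C2ᴴ * Gz * C1) (C2ᴴ * Gz * C2) := by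
    rw [hWcols, Matrix.conjTranspose_fromCols_eq_fromRows_conjTranspose,
      Matrix.fromRows_mul, Matrix.fromRows_mul_fromCols]
  have hdetP : (Wᴴ * Gz * W).det = (lam : ℂ) := by
    rw [hWP, hblock21, hblock22]
    rw [Matrix.det_fromBlocks_zero₂₁, Matrix.det_one, mul_one, Matrix.det_fin_one, hblock11]
  -- |det W|² dGz = lam
  have habs2 : ‖W.det‖^2 * dGz = lam := by
    have := det_sandwich_eq Gz W hdetGzC
    rw [hdetP] at this
    exact_mod_cast this.symm
  have hdetW : W.det ≠ 0 := by
    intro h0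
    rw [h0] at habs2
    simp at habs2
    nlinarith
  have habspos : 0 < ‖W.det‖ := norm_pos_iff.mpr hdetW
  refine ⟨isUnit_iff_ne_zero.mpr hdetW, ?_⟩
  -- log of |det W|
  have hlogW : 2 * Real.log ‖W.det‖ = Real.log lam - Real.log dGz := by
    have ht2 : ‖W.det‖^2 = lam / dGz := by
      field_simp at habs2 ⊢
      linarith
    have := congrArg Real.log ht2
    rw [Real.log_pow, Real.log_div hlam.ne' hdGz.ne'] at this
    exact_mod_cast this
  -- value of JW at W
  have hJWW : JW G1 Gz W = (1 + L : ℝ) - Real.log lam + Real.log dGz := by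
    rw [JW]
    have ht1 : (star (fun i => W i (Sum.inl 0)) ⬝ᵥ (G1 *ᵥ fun i => W i (Sum.inl 0))).re
        = 1 := by
      rw [hcol1, quad_smul, hrC]
      rw [show ((c^2:ℝ):ℂ) * (r:ℂ) = (((c^2*r : ℝ)):ℂ) from by push_cast; ring, hc2]
      norm_num
    have ht2 : (Matrix.trace ((W.submatrix id Sum.inr)ᴴ * Gz * (W.submatrix id Sum.inr))).re
        = (L : ℝ) := by
      rw [hsub, hblock22, Matrix.trace_one]
      simp
    rw [ht1, ht2, hlogW]
    ring
  -- lower bound for arbitrary invertible W'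
  intro W' hW'
  rw [hJWW]
  set s : ℝ := (Real.sqrt lam)⁻¹ with hsdef
  have hs : 0 < s := by positivity
  have hs2 : s^2 = lam⁻¹ := by
    rw [hsdef, inv_pow, Real.sq_sqrt hlam.le]
  set d : (Fin 1 ⊕ Fin L) → ℂ := Sum.elim (fun _ => ((s:ℝ):ℂ)) (fun _ => 1) with hddef
  set T : Matrix (Fin 1 ⊕ Fin L) (Fin 1 ⊕ Fin L) ℂ := W' * Matrix.diagonal d with hTdef
  have hTapp : ∀ i j, T i j = W' i j * d j := by
    intro i j
    rw [hTdef, Matrix.mul_diagonal]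
  have hdetT : T.det = W'.det * ((s:ℝ):ℂ) := by
    rw [hTdef, Matrix.det_mul, Matrix.det_diagonal]
    congr 1
    rw [hddef, Fintype.prod_sum_type]
    simp
  have hdetT0 : T.det ≠ 0 := by
    rw [hdetT]
    exact mul_ne_zero (by simpa [isUnit_iff_ne_zero] using hW')
      (Complex.ofReal_ne_zero.mpr hs.ne')
  have habsT : ‖T.det‖ = ‖W'.det‖ * s := by
    rw [hdetT, norm_mul, Complex.norm_real, Real.norm_eq_abs, abs_of_pos hs]
  -- the positive definite sandwich
  have hPT : (Tᴴ * Gz * T).PosDef := posDef_conj_mul hGz (isUnit_iff_ne_zero.mpr hdetT0)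
  have hkey := card_le_trace_sub_log_det hPT
  -- compute card
  have hcard : (Fintype.card (Fin 1 ⊕ Fin L) : ℝ) = 1 + L := by
    simp
  -- determinant of the sandwich
  have hdetPT : (Tᴴ * Gz * T).det.re = ‖T.det‖^2 * dGz := by
    rw [det_sandwich_eq Gz T hdetGzC, Complex.ofReal_re]
  have hlogPT : Real.log ((Tᴴ * Gz * T).det.re)
      = 2 * Real.log ‖W'.det‖ - Real.log lam + Real.log dGz := by
    have habsW' : 0 < ‖W'.det‖ :=
      norm_pos_iff.mpr (by simpa [isUnit_iff_ne_zero] using hW')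
    have hlogs : Real.log s = -(Real.log lam / 2) := by
      rw [hsdef, Real.log_inv, Real.log_sqrt hlam.le]
    rw [hdetPT, habsT, mul_pow, Real.log_mul (by positivity) hdGz.ne',
      Real.log_mul (by positivity) (by positivity), Real.log_pow, Real.log_pow, hlogs]
    push_cast
    ring
  -- trace decomposition
  set w1' : (Fin 1 ⊕ Fin L) → ℂ := fun i => W' i (Sum.inl 0) with hw1def
  have htcol1 : (fun i => T i (Sum.inl 0)) = ((s:ℂ)) • w1' := by
    funext i
    rw [hTapp]
    simp [hddef, hw1def, mul_comm]
  have htcol2 : ∀ j : Fin L, (fun i => T i (Sum.inr j)) = fun i => W' i (Sum.inr j) := by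
    intro j
    funext i
    rw [hTapp]
    simp [hddef]
  have htr : (Matrix.trace (Tᴴ * Gz * T)).re
      = lam⁻¹ * (star w1' ⬝ᵥ (Gz *ᵥ w1')).re
        + (Matrix.trace ((W'.submatrix id Sum.inr)ᴴ * Gz * (W'.submatrix id Sum.inr))).re := by
    have h1 : Matrix.trace (Tᴴ * Gz * T) = ∑ i, (Tᴴ * Gz * T) i i := rfl
    have h2 : Matrix.trace ((W'.submatrix id Sum.inr)ᴴ * Gz * (W'.submatrix id Sum.inr))
        = ∑ j, ((W'.submatrix id Sum.inr)ᴴ * Gz * (W'.submatrix id Sum.inr)) j j := rfl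
    rw [h1, h2, Fintype.sum_sum_type]
    rw [show (∑ a : Fin 1, (Tᴴ * Gz * T) (Sum.inl a) (Sum.inl a))
        = (Tᴴ * Gz * T) (Sum.inl 0) (Sum.inl 0) from by simp]
    rw [diag_entry, htcol1, quad_smul, hs2]
    have h3 : ∀ j : Fin L, (Tᴴ * Gz * T) (Sum.inr j) (Sum.inr j)
        = ((W'.submatrix id Sum.inr)ᴴ * Gz * (W'.submatrix id Sum.inr)) j j := by
      intro j
      rw [diag_entry, diag_entry, htcol2 j]
      congr 1
    simp only [h3]
    rw [Complex.add_re]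
    congr 1
    exact Complex.re_ofReal_mul _ _
  -- Rayleigh step
  have hray : lam⁻¹ * (star w1' ⬝ᵥ (Gz *ᵥ w1')).re ≤ (star w1' ⬝ᵥ (G1 *ᵥ w1')).re :=
    pencil_quad_lb hG1 hGz hmax w1'
  -- put everything together
  rw [hcard, htr, hlogPT] at hkey
  rw [JW]
  have : (star (fun i => W' i (Sum.inl 0)) ⬝ᵥ (G1 *ᵥ fun i => W' i (Sum.inl 0))).re
      = (star w1' ⬝ᵥ (G1 *ᵥ w1')).re := rfl
  rw [this]
  linarith
end
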